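/- Let x : [n] → [c] be a token sequence with x_k = k for all k ≤ c, let π ∈ ℝ^c have strictly positive entries, let f : [c] → 2^{[c]} satisfy f(x) ≠ ∅ for all x, let V = {v_k}_{k=1}^n be a good sequence in ℝ^d converging to Z = {z_x}_{x∈[c]} with parameter γ, and let A be a nice attention map with parameter ψ that reflects f. Set N = max_{y∈[c]} ‖z_y‖, F_{y,k} = #{j ≤ k : x_j = y}, and R_k(x) = Σ_{y'∈f(x)} F_{y',k}. Suppose there is β > 0 such that for all k ∈ [n], all x ∈ [c] and all y ∈ f(x): |F_{y,k}/R_k(x) − π_y/(Σ_{y'∈f(x)} π_{y'})| ≤ β/√k. Then AV is a good sequence converging to Z' = { (Σ_{y∈f(x)} π_y z_y) / (Σ_{y∈f(x)} π_y) }_{x∈[c]} with parameter 2ψγ + Ncψ + Ncβ + (c+1)²ψ(γ + N). -/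

import Mathlib

open Finset

lemma sum_inv_sqrt_le' (k : ℕ) : ∑ j ∈ Icc 1 k, 1 / Real.sqrt j ≤ 2 * Real.sqrt k := by
  induction k with
  | zero => simp
  | succ m ih =>
    rw [Finset.sum_Icc_succ_top (by omega : 1 ≤ m + 1)]
    have hm : Real.sqrt m ^ 2 = m := Real.sq_sqrt (by positivity)
    have hm1 : Real.sqrt ((m : ℝ) + 1) ^ 2 = (m : ℝ) + 1 := Real.sq_sqrt (by positivity)
    have h0 : 0 < Real.sqrt ((m : ℝ) + 1) := Real.sqrt_pos.mpr (by positivity)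
    have key : 1 / Real.sqrt ((m:ℝ)+1) ≤ 2 * Real.sqrt ((m:ℝ)+1) - 2 * Real.sqrt m := by
      rw [div_le_iff₀ h0]
      nlinarith [sq_nonneg (Real.sqrt m - Real.sqrt ((m:ℝ)+1)), Real.sqrt_nonneg (m:ℝ)]
    push_cast
    linarith

lemma abel_aux' (a g : ℕ → ℝ) (C : ℝ)
    (hgm : ∀ j, 1 ≤ j → g (j+1) ≤ g j) :
    ∀ m, (∀ j, 1 ≤ j → j ≤ m → ∑ i ∈ Icc 1 j, a i ≤ C * j) →
      ∑ j ∈ Icc 1 m, a j * g j ≤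
        C * ∑ j ∈ Icc 1 m, g j + ((∑ i ∈ Icc 1 m, a i) - C * m) * g m := by
  intro m
  induction m with
  | zero => simp
  | succ m ih =>
    intro hs
    rw [Finset.sum_Icc_succ_top (by omega : 1 ≤ m+1),
        Finset.sum_Icc_succ_top (by omega : 1 ≤ m+1),
        Finset.sum_Icc_succ_top (by omega : 1 ≤ m+1)]
    have ih' := ih (fun j h1 h2 => hs j h1 (by omega))
    have key : ((∑ i ∈ Icc 1 m, a i) - C * m) * g m ≤
        ((∑ i ∈ Icc 1 m, a i) - C * m) * g (m+1) := by
      rcases Nat.eq_zero_or_pos m with h | h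
      · subst h; simp
      · have hsm : (∑ i ∈ Icc 1 m, a i) - C * m ≤ 0 := by
          have := hs m h (by omega); linarith
        exact mul_le_mul_of_nonpos_left (hgm m h) hsm
    push_cast
    nlinarith [ih', key]

set_option maxHeartbeats 1000000 in
/-- Context-wise convergence: if the token frequencies are
close to the stationary distribution `π` (at rate `β/√k`), then applying a nice
attention map reflecting `f` to a good sequence yields a good sequence
converging to `z'_x = (∑_{y ∈ f(x)} π_y z_y)/(∑_{y ∈ f(x)} π_y)` with parameter
`2ψγ + Ncψ + Ncβ + (c+1)²ψ(γ+N)`. -/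
theorem attention_reflecting_setvalued_good_sequence
    (n c d : ℕ) (hc : 1 ≤ c) (hcn : c ≤ n)
    (x : ℕ → ℕ) (hx : ∀ k ∈ Icc 1 n, x k ∈ Icc 1 c)
    (hx_init : ∀ k ∈ Icc 1 c, x k = k)
    (π : ℕ → ℝ) (hπ : ∀ y ∈ Icc 1 c, 0 < π y)
    (f : ℕ → Finset ℕ)
    (hf_sub : ∀ y ∈ Icc 1 c, f y ⊆ Icc 1 c)
    (hf_ne : ∀ y ∈ Icc 1 c, (f y).Nonempty)
    (v z : ℕ → EuclideanSpace ℝ (Fin d)) (γ ψ N β : ℝ)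
    (hγ : 0 < γ) (hψ : 0 < ψ) (hβ : 0 < β)
    (hN : N = (Icc 1 c).sup' (Finset.nonempty_Icc.mpr hc) (fun y => ‖z y‖))
    (A : ℕ → ℕ → ℝ)
    (hA_nonneg : ∀ k j, 0 ≤ A k j)
    (hA_tri : ∀ k j, k < j → A k j = 0)
    (hA_row : ∀ k ∈ Icc 1 n, ∑ j ∈ Icc 1 k, A k j = 1)
    (hA_nice : ∀ k ∈ Icc 1 n, ∀ j ∈ Icc 1 k,
      ∑ i ∈ Icc 1 j, A k i ≤ ψ * j / k)
    (hrefl1 : ∀ k ∈ Icc 1 n, c < k → ∀ j ∈ Icc 1 k, 0 < A k j → x j ∈ f (x k))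
    (hrefl2 : ∀ k ∈ Icc 1 n, ∀ y ∈ f (x k),
      |(∑ j ∈ (Icc 1 k).filter (fun j => x j = y), A k j) -
          (((Icc 1 k).filter (fun j => x j = y)).card : ℝ) /
            ∑ y' ∈ f (x k), (((Icc 1 k).filter (fun j => x j = y')).card : ℝ)|
        ≤ ψ / Real.sqrt k)
    (hfreq : ∀ k ∈ Icc 1 n, ∀ x' ∈ Icc 1 c, ∀ y ∈ f x',
      |(((Icc 1 k).filter (fun j => x j = y)).card : ℝ) /
          (∑ y' ∈ f x', (((Icc 1 k).filter (fun j => x j = y')).card : ℝ)) -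
          π y / ∑ y' ∈ f x', π y'|
        ≤ β / Real.sqrt k)
    (hgood : ∀ k ∈ Icc 1 n, ‖v k - z (x k)‖ ≤ γ / Real.sqrt k) :
    ∀ k ∈ Icc 1 n,
      ‖(∑ j ∈ Icc 1 k, A k j • v j) -
          (∑ y ∈ f (x k), π y)⁻¹ • ∑ y ∈ f (x k), π y • z y‖ ≤
        (2 * ψ * γ + N * c * ψ + N * c * β + (c + 1) ^ 2 * ψ * (γ + N)) /
          Real.sqrt k := by
  intro k hk
  obtain ⟨hk1, hkn⟩ := Finset.mem_Icc.mp hk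
  have hk0 : (0:ℝ) < k := by exact_mod_cast hk1
  have hsk : 0 < Real.sqrt k := Real.sqrt_pos.mpr hk0
  have hxk : x k ∈ Icc 1 c := hx k hk
  set S : Finset ℕ := f (x k) with hS
  have hSsub : S ⊆ Icc 1 c := hf_sub _ hxk
  have hSne : S.Nonempty := hf_ne _ hxk
  have hπS : 0 < ∑ y ∈ S, π y :=
    Finset.sum_pos (fun y hy => hπ y (hSsub hy)) hSne
  have hNy : ∀ y ∈ Icc 1 c, ‖z y‖ ≤ N := fun y hy => hN ▸ Finset.le_sup' (fun y => ‖z y‖) hy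
  have hN0 : 0 ≤ N := le_trans (norm_nonneg _) (hNy (x k) hxk)
  have hψ1 : 1 ≤ ψ := by
    have h := hA_nice k hk k (Finset.mem_Icc.mpr ⟨hk1, le_rfl⟩)
    rw [hA_row k hk, mul_div_assoc, div_self (ne_of_gt hk0), mul_one] at h
    exact h
  -- norm of the limit vector
  have hz' : ‖(∑ y ∈ S, π y)⁻¹ • ∑ y ∈ S, π y • z y‖ ≤ N := by
    rw [norm_smul, Real.norm_eq_abs, abs_of_pos (inv_pos.mpr hπS)]
    have h1 : ‖∑ y ∈ S, π y • z y‖ ≤ N * ∑ y ∈ S, π y := by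
      calc ‖∑ y ∈ S, π y • z y‖ ≤ ∑ y ∈ S, ‖π y • z y‖ := norm_sum_le _ _
        _ ≤ ∑ y ∈ S, π y * N := by
            refine Finset.sum_le_sum fun y hy => ?_
            rw [norm_smul, Real.norm_eq_abs, abs_of_pos (hπ y (hSsub hy))]
            exact mul_le_mul_of_nonneg_left (hNy y (hSsub hy)) (le_of_lt (hπ y (hSsub hy)))
        _ = N * ∑ y ∈ S, π y := by rw [← Finset.sum_mul]; ring
    calc (∑ y ∈ S, π y)⁻¹ * ‖∑ y ∈ S, π y • z y‖
        ≤ (∑ y ∈ S, π y)⁻¹ * (N * ∑ y ∈ S, π y) := by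
          exact mul_le_mul_of_nonneg_left h1 (le_of_lt (inv_pos.mpr hπS))
      _ = N := by field_simp
  -- bound on ‖v j‖ etc used in both cases
  have hvj : ∀ j ∈ Icc 1 k, ‖v j - z (x j)‖ ≤ γ / Real.sqrt j := by
    intro j hj
    obtain ⟨hj1, hjk⟩ := Finset.mem_Icc.mp hj
    exact hgood j (Finset.mem_Icc.mpr ⟨hj1, le_trans hjk hkn⟩)
  rcases le_or_gt k c with hkc | hck
  · -- small k: crude bound
    have hbound : ‖(∑ j ∈ Icc 1 k, A k j • v j) -
        (∑ y ∈ S, π y)⁻¹ • ∑ y ∈ S, π y • z y‖ ≤ 2 * (γ + N) := by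
      have h1 : ‖∑ j ∈ Icc 1 k, A k j • v j‖ ≤ γ + N := by
        calc ‖∑ j ∈ Icc 1 k, A k j • v j‖ ≤ ∑ j ∈ Icc 1 k, ‖A k j • v j‖ := norm_sum_le _ _
          _ ≤ ∑ j ∈ Icc 1 k, A k j * (γ + N) := by
              refine Finset.sum_le_sum fun j hj => ?_
              obtain ⟨hj1, hjk⟩ := Finset.mem_Icc.mp hj
              have hj0 : (1:ℝ) ≤ Real.sqrt j := by
                rw [show (1:ℝ) = Real.sqrt 1 by simp]
                exact Real.sqrt_le_sqrt (by exact_mod_cast hj1)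
              have hvn : ‖v j‖ ≤ γ + N := by
                have h2 : ‖v j‖ ≤ ‖v j - z (x j)‖ + ‖z (x j)‖ := by simpa using norm_add_le (v j - z (x j)) (z (x j))
                have h3 : γ / Real.sqrt j ≤ γ := by
                  rw [div_le_iff₀ (by linarith)]; nlinarith
                have h4 : ‖z (x j)‖ ≤ N :=
                  hNy (x j) (hx j (Finset.mem_Icc.mpr ⟨hj1, le_trans hjk hkn⟩))
                linarith [hvj j hj]
              rw [norm_smul, Real.norm_eq_abs, abs_of_nonneg (hA_nonneg k j)]
              exact mul_le_mul_of_nonneg_left hvn (hA_nonneg k j)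
          _ = γ + N := by rw [← Finset.sum_mul, hA_row k hk, one_mul]
      calc ‖(∑ j ∈ Icc 1 k, A k j • v j) - (∑ y ∈ S, π y)⁻¹ • ∑ y ∈ S, π y • z y‖
          ≤ ‖∑ j ∈ Icc 1 k, A k j • v j‖ + ‖(∑ y ∈ S, π y)⁻¹ • ∑ y ∈ S, π y • z y‖ :=
            norm_sub_le _ _
        _ ≤ 2 * (γ + N) := by linarith
    have hskc : Real.sqrt k ≤ c := by
      have h1 : (k:ℝ) ≤ (c:ℝ)^2 := by
        have : (c:ℝ) ≥ 1 := by exact_mod_cast hc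
        have : (k:ℝ) ≤ c := by exact_mod_cast hkc
        nlinarith
      calc Real.sqrt k ≤ Real.sqrt ((c:ℝ)^2) := Real.sqrt_le_sqrt h1
        _ = c := Real.sqrt_sq (by positivity)
    refine le_trans hbound ?_
    rw [le_div_iff₀ hsk]
    have hc1 : (1:ℝ) ≤ c := by exact_mod_cast hc
    have hγN : (0:ℝ) ≤ γ + N := by linarith
    have e1 : 2*(γ+N)*Real.sqrt k ≤ 2*(γ+N)*c := by nlinarith [hskc]
    have e2 : 2*(γ+N)*(c:ℝ) ≤ ((c:ℝ)+1)^2*(γ+N) := by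
      nlinarith [mul_nonneg (by positivity : (0:ℝ) ≤ (c:ℝ)^2+1) hγN]
    have e3 : ((c:ℝ)+1)^2*(γ+N) ≤ ((c:ℝ)+1)^2*ψ*(γ+N) := by
      nlinarith [mul_nonneg (by positivity : (0:ℝ) ≤ ((c:ℝ)+1)^2) hγN]
    have e4 : (0:ℝ) ≤ 2*ψ*γ := by positivity
    have e5 : (0:ℝ) ≤ N * c * ψ := by positivity
    have e6 : (0:ℝ) ≤ N * c * β := by positivity
    linarith
  · -- main case : c < k
    have hkk : Real.sqrt k * Real.sqrt k = k := Real.mul_self_sqrt hk0.le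
    -- T1 bound
    have hT1 : ‖∑ j ∈ Icc 1 k, A k j • (v j - z (x j))‖ ≤ 2 * ψ * γ / Real.sqrt k := by
      have step1 : ‖∑ j ∈ Icc 1 k, A k j • (v j - z (x j))‖ ≤
          ∑ j ∈ Icc 1 k, A k j * (γ / Real.sqrt j) := by
        refine le_trans (norm_sum_le _ _) (Finset.sum_le_sum fun j hj => ?_)
        rw [norm_smul, Real.norm_eq_abs, abs_of_nonneg (hA_nonneg k j)]
        exact mul_le_mul_of_nonneg_left (hvj j hj) (hA_nonneg k j)
      have hgmono : ∀ j, 1 ≤ j → γ / Real.sqrt ((j:ℕ)+1 : ℕ) ≤ γ / Real.sqrt j := by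
        intro j hj
        have h0 : (0:ℝ) < Real.sqrt j := Real.sqrt_pos.mpr (by exact_mod_cast hj)
        have h1 : Real.sqrt (j:ℝ) ≤ Real.sqrt ((j:ℕ)+1 : ℕ) := by
          apply Real.sqrt_le_sqrt; push_cast; linarith
        exact div_le_div_of_nonneg_left hγ.le h0 h1
      have hs : ∀ j, 1 ≤ j → j ≤ k → ∑ i ∈ Icc 1 j, A k i ≤ (ψ / k) * j := by
        intro j h1 h2
        have h := hA_nice k hk j (Finset.mem_Icc.mpr ⟨h1, h2⟩)
        calc ∑ i ∈ Icc 1 j, A k i ≤ ψ * j / k := h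
          _ = (ψ / k) * j := by ring
      have habel := abel_aux' (A k) (fun j => γ / Real.sqrt j) (ψ / k) hgmono k hs
      rw [hA_row k hk] at habel
      have hψk : (ψ / (k:ℝ)) * (k:ℝ) = ψ := by field_simp
      have hsecond : (1 - ψ / (k:ℝ) * (k:ℝ)) * (γ / Real.sqrt k) ≤ 0 := by
        rw [hψk]
        apply mul_nonpos_of_nonpos_of_nonneg (by linarith) (by positivity)
      have hsum : ∑ j ∈ Icc 1 k, γ / Real.sqrt j ≤ γ * (2 * Real.sqrt k) := by
        have h1 : ∑ j ∈ Icc 1 k, γ / Real.sqrt j = γ * ∑ j ∈ Icc 1 k, 1 / Real.sqrt j := by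
          rw [Finset.mul_sum]; exact Finset.sum_congr rfl fun j _ => by ring
        rw [h1]
        exact mul_le_mul_of_nonneg_left (sum_inv_sqrt_le' k) hγ.le
      have hfin : (ψ / (k:ℝ)) * (γ * (2 * Real.sqrt k)) = 2 * ψ * γ / Real.sqrt k := by
        field_simp
        linear_combination hkk
      calc ‖∑ j ∈ Icc 1 k, A k j • (v j - z (x j))‖
          ≤ ∑ j ∈ Icc 1 k, A k j * (γ / Real.sqrt j) := step1
        _ ≤ (ψ / k) * ∑ j ∈ Icc 1 k, γ / Real.sqrt j
              + (1 - ψ / (k:ℝ) * (k:ℝ)) * (γ / Real.sqrt k) := habel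
        _ ≤ (ψ / k) * (γ * (2 * Real.sqrt k)) := by
            have := mul_le_mul_of_nonneg_left hsum (by positivity : (0:ℝ) ≤ ψ / k)
            linarith
        _ = 2 * ψ * γ / Real.sqrt k := hfin
    -- T2 part
    set w : ℕ → ℝ := fun y => ∑ j ∈ (Icc 1 k).filter (fun j => x j = y), A k j with hw_def
    set p : ℕ → ℝ := fun y => π y / ∑ y' ∈ S, π y' with hp_def
    have hmaps : ∀ j ∈ Icc 1 k, x j ∈ Icc 1 c := by
      intro j hj
      obtain ⟨h1, h2⟩ := Finset.mem_Icc.mp hj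
      exact hx j (Finset.mem_Icc.mpr ⟨h1, le_trans h2 hkn⟩)
    have hfib : ∀ y, ∑ j ∈ (Icc 1 k).filter (fun j => x j = y), A k j • z (x j) = w y • z y := by
      intro y
      have h1 : ∑ j ∈ (Icc 1 k).filter (fun j => x j = y), A k j • z (x j)
          = ∑ j ∈ (Icc 1 k).filter (fun j => x j = y), A k j • z y :=
        Finset.sum_congr rfl fun j hj => by rw [(Finset.mem_filter.mp hj).2]
      rw [h1, ← Finset.sum_smul]
    have hvan : ∀ y ∈ Icc 1 c, y ∉ S → w y • z y = 0 := by
      intro y hy hyS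
      have hw : w y = 0 := by
        apply Finset.sum_eq_zero
        intro j hj
        obtain ⟨hjk', hxj⟩ := Finset.mem_filter.mp hj
        by_contra hne
        have hpos : 0 < A k j := lt_of_le_of_ne (hA_nonneg k j) (Ne.symm hne)
        exact hyS (hxj ▸ hrefl1 k hk hck j hjk' hpos)
      rw [hw, zero_smul]
    have hAz : ∑ j ∈ Icc 1 k, A k j • z (x j) = ∑ y ∈ S, w y • z y := by
      calc ∑ j ∈ Icc 1 k, A k j • z (x j)
          = ∑ y ∈ Icc 1 c, ∑ j ∈ (Icc 1 k).filter (fun j => x j = y), A k j • z (x j) :=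
            (Finset.sum_fiberwise_of_maps_to hmaps _).symm
        _ = ∑ y ∈ Icc 1 c, w y • z y := Finset.sum_congr rfl fun y _ => hfib y
        _ = ∑ y ∈ S, w y • z y := (Finset.sum_subset hSsub hvan).symm
    have hzp : (∑ y ∈ S, π y)⁻¹ • ∑ y ∈ S, π y • z y = ∑ y ∈ S, p y • z y := by
      rw [Finset.smul_sum]
      refine Finset.sum_congr rfl fun y _ => ?_
      rw [smul_smul]
      congr 1
      rw [inv_mul_eq_div]
    have hwp : ∀ y ∈ S, |w y - p y| ≤ (ψ + β) / Real.sqrt k := by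
      intro y hy
      have h2 := hrefl2 k hk y hy
      have h3 := hfreq k hk (x k) hxk y hy
      calc |w y - p y|
          ≤ |w y - (((Icc 1 k).filter (fun j => x j = y)).card : ℝ) /
              ∑ y' ∈ S, (((Icc 1 k).filter (fun j => x j = y')).card : ℝ)|
            + |(((Icc 1 k).filter (fun j => x j = y)).card : ℝ) /
              (∑ y' ∈ S, (((Icc 1 k).filter (fun j => x j = y')).card : ℝ)) - p y| :=
            abs_sub_le _ _ _
        _ ≤ ψ / Real.sqrt k + β / Real.sqrt k := add_le_add h2 h3
        _ = (ψ + β) / Real.sqrt k := by rw [add_div]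
    have hsplit : (∑ j ∈ Icc 1 k, A k j • v j) - (∑ y ∈ S, π y)⁻¹ • ∑ y ∈ S, π y • z y
        = (∑ j ∈ Icc 1 k, A k j • (v j - z (x j))) + ∑ y ∈ S, (w y - p y) • z y := by
      rw [hzp]
      have e1 : ∑ j ∈ Icc 1 k, A k j • (v j - z (x j))
          = ∑ j ∈ Icc 1 k, A k j • v j - ∑ j ∈ Icc 1 k, A k j • z (x j) := by
        rw [← Finset.sum_sub_distrib]
        exact Finset.sum_congr rfl fun j _ => smul_sub _ _ _
      have e2 : ∑ y ∈ S, (w y - p y) • z y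
          = ∑ y ∈ S, w y • z y - ∑ y ∈ S, p y • z y := by
        rw [← Finset.sum_sub_distrib]
        exact Finset.sum_congr rfl fun y _ => sub_smul _ _ _
      rw [e1, e2, hAz]
      abel
    have hScard : (S.card : ℝ) ≤ c := by
      have h1 : S.card ≤ c := by
        have := Finset.card_le_card hSsub
        simpa [Nat.card_Icc] using this
      exact_mod_cast h1
    have hT2 : ‖∑ y ∈ S, (w y - p y) • z y‖ ≤ (N * c * ψ + N * c * β) / Real.sqrt k := by
      calc ‖∑ y ∈ S, (w y - p y) • z y‖
          ≤ ∑ y ∈ S, ‖(w y - p y) • z y‖ := norm_sum_le _ _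
        _ ≤ ∑ y ∈ S, (ψ + β) / Real.sqrt k * N := by
            refine Finset.sum_le_sum fun y hy => ?_
            rw [norm_smul, Real.norm_eq_abs]
            exact mul_le_mul (hwp y hy) (hNy y (hSsub hy)) (norm_nonneg _) (by positivity)
        _ = (S.card : ℝ) * ((ψ + β) / Real.sqrt k * N) := by
            rw [Finset.sum_const, nsmul_eq_mul]
        _ ≤ (c : ℝ) * ((ψ + β) / Real.sqrt k * N) := by
            apply mul_le_mul_of_nonneg_right hScard (by positivity)
        _ = (N * c * ψ + N * c * β) / Real.sqrt k := by
            field_simp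
    have hextra : (0:ℝ) ≤ ((c:ℝ) + 1) ^ 2 * ψ * (γ + N) / Real.sqrt k := by
      apply div_nonneg _ hsk.le
      apply mul_nonneg (mul_nonneg (by positivity) hψ.le) (by linarith)
    calc ‖(∑ j ∈ Icc 1 k, A k j • v j) - (∑ y ∈ S, π y)⁻¹ • ∑ y ∈ S, π y • z y‖
        = ‖(∑ j ∈ Icc 1 k, A k j • (v j - z (x j))) + ∑ y ∈ S, (w y - p y) • z y‖ := by
          rw [hsplit]
      _ ≤ ‖∑ j ∈ Icc 1 k, A k j • (v j - z (x j))‖ + ‖∑ y ∈ S, (w y - p y) • z y‖ :=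
          norm_add_le _ _
      _ ≤ 2 * ψ * γ / Real.sqrt k + (N * c * ψ + N * c * β) / Real.sqrt k :=
          add_le_add hT1 hT2
      _ ≤ (2 * ψ * γ + N * c * ψ + N * c * β + ((c:ℝ) + 1) ^ 2 * ψ * (γ + N)) / Real.sqrt k := by
          have hnum : 2*ψ*γ + (N*(c:ℝ)*ψ + N*(c:ℝ)*β) ≤
              2*ψ*γ + N*(c:ℝ)*ψ + N*(c:ℝ)*β + ((c:ℝ)+1)^2*ψ*(γ+N) := by
            nlinarith [mul_nonneg (mul_nonneg (by positivity : (0:ℝ) ≤ ((c:ℝ)+1)^2) hψ.le)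
              (by linarith : (0:ℝ) ≤ γ+N)]
          rw [← add_div]
          exact (div_le_div_iff_of_pos_right hsk).mpr hnum
      _ = (2 * ψ * γ + N * (c:ℝ) * ψ + N * (c:ℝ) * β + ((c:ℝ) + 1) ^ 2 * ψ * (γ + N)) /
            Real.sqrt k := by norm_num
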